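/- Under inverse stereographic projection from T*R^d to T*R^{d+1}, the symplectic structure is preserved: the pullback of the canonical symplectic form Σ_k dv_k ∧ du_k on R^{d+1}×R^{d+1} under the map (X,Y) ↦ (u,v) given by u_k = 2X_k/(|X|^2+1), u_{d+1} = (|X|^2-1)/(|X|^2+1), v_k = ((|X|^2+1)/2)Y_k - <X,Y>X_k, v_{d+1} = <X,Y>, equals Σ_k dY_k ∧ dX_k. -/

import Mathlib

open Finset

/-- Inverse stereographic projection as a map `T*ℝ^d → T*ℝ^{d+1}`,
`(X, Y) ↦ (u, v)`. -/
noncomputable def invSter (d : ℕ) :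
    ((Fin d → ℝ) × (Fin d → ℝ)) → ((Fin (d + 1) → ℝ) × (Fin (d + 1) → ℝ)) :=
  fun z =>
    (Fin.snoc (fun k => 2 * z.1 k / (∑ i, z.1 i ^ 2 + 1))
        ((∑ i, z.1 i ^ 2 - 1) / (∑ i, z.1 i ^ 2 + 1)),
     Fin.snoc (fun k => ((∑ i, z.1 i ^ 2 + 1) / 2) * z.2 k - (∑ i, z.1 i * z.2 i) * z.1 k)
        (∑ i, z.1 i * z.2 i))

abbrev EE (d : ℕ) := (Fin d → ℝ) × (Fin d → ℝ)

private lemma myDiv {E : Type*} [NormedAddCommGroup E] [NormedSpace ℝ E]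
    {f g : E → ℝ} {f' g' : E →L[ℝ] ℝ} {x : E}
    (hf : HasFDerivAt f f' x) (hg : HasFDerivAt g g' x) (hx : g x ≠ 0) :
    HasFDerivAt (fun y => f y / g y)
      (f x • ((ContinuousLinearMap.smulRight (1 : ℝ →L[ℝ] ℝ) (-(g x ^ 2)⁻¹)).comp g')
        + (g x)⁻¹ • f') x := by
  simpa only [div_eq_mul_inv, ContinuousLinearMap.smulRight_one_eq_toSpanSingleton, Function.comp_def, Pi.mul_def] using hf.mul ((hasFDerivAt_inv hx).comp x hg)

variable {d : ℕ}

private lemma h1 (z : EE d) (i : Fin d) : HasFDerivAt (fun z : EE d => z.1 i)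
    (((ContinuousLinearMap.proj i).comp (ContinuousLinearMap.fst ℝ (Fin d → ℝ) (Fin d → ℝ))) : EE d →L[ℝ] ℝ) z :=
  (((ContinuousLinearMap.proj i).comp (ContinuousLinearMap.fst ℝ (Fin d → ℝ) (Fin d → ℝ)))).hasFDerivAt

private lemma h2 (z : EE d) (i : Fin d) : HasFDerivAt (fun z : EE d => z.2 i)
    (((ContinuousLinearMap.proj i).comp (ContinuousLinearMap.snd ℝ (Fin d → ℝ) (Fin d → ℝ))) : EE d →L[ℝ] ℝ) z :=
  (((ContinuousLinearMap.proj i).comp (ContinuousLinearMap.snd ℝ (Fin d → ℝ) (Fin d → ℝ)))).hasFDerivAt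

private lemma hrD (z : EE d) : HasFDerivAt (fun z : EE d => ∑ i, z.1 i ^ 2)
    (∑ i : Fin d, (z.1 i • (((ContinuousLinearMap.proj i).comp (ContinuousLinearMap.fst ℝ (Fin d → ℝ) (Fin d → ℝ))) : EE d →L[ℝ] ℝ)
      + z.1 i • (((ContinuousLinearMap.proj i).comp (ContinuousLinearMap.fst ℝ (Fin d → ℝ) (Fin d → ℝ))) : EE d →L[ℝ] ℝ))) z :=
  (show (fun z : EE d => ∑ i, z.1 i ^ 2) = fun z : EE d => ∑ i, z.1 i * z.1 i from
    funext fun z => Finset.sum_congr rfl fun i _ => sq (z.1 i)) ▸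
  HasFDerivAt.fun_sum (fun i (_ : i ∈ univ) => (h1 z i).mul (h1 z i))

private lemma hpD (z : EE d) : HasFDerivAt (fun z : EE d => ∑ i, z.1 i * z.2 i)
    (∑ i : Fin d, (z.1 i • (((ContinuousLinearMap.proj i).comp (ContinuousLinearMap.snd ℝ (Fin d → ℝ) (Fin d → ℝ))) : EE d →L[ℝ] ℝ)
      + z.2 i • (((ContinuousLinearMap.proj i).comp (ContinuousLinearMap.fst ℝ (Fin d → ℝ) (Fin d → ℝ))) : EE d →L[ℝ] ℝ))) z :=
  HasFDerivAt.fun_sum (fun i (_ : i ∈ univ) => (h1 z i).mul (h2 z i))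

private lemma hsne (z : EE d) : (∑ i, z.1 i ^ 2 + 1) ≠ 0 := by positivity

private lemma hu (z : EE d) (k : Fin d) :
    ∃ L : EE d →L[ℝ] ℝ, HasFDerivAt (fun z : EE d => 2 * z.1 k / (∑ i, z.1 i ^ 2 + 1)) L z ∧
      ∀ w : EE d, L w = (2 * w.1 k * (∑ i, z.1 i ^ 2 + 1) - 4 * (∑ i, z.1 i * w.1 i) * z.1 k)
        / (∑ i, z.1 i ^ 2 + 1) ^ 2 := by
  refine ⟨_, myDiv ((h1 z k).const_mul 2) ((hrD z).add_const 1) (hsne z), fun w => ?_⟩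
  have hs := hsne z
  simp only [ContinuousLinearMap.add_apply, ContinuousLinearMap.smul_apply,
    ContinuousLinearMap.coe_sum', Finset.sum_apply, ContinuousLinearMap.comp_apply,
    ContinuousLinearMap.smulRight_apply, ContinuousLinearMap.one_apply,
    ContinuousLinearMap.proj_apply, ContinuousLinearMap.coe_fst', ContinuousLinearMap.coe_snd',
    smul_eq_mul]
  rw [show (∑ i, (z.1 i * w.1 i + z.1 i * w.1 i)) = 2 * ∑ i, z.1 i * w.1 i by
    rw [Finset.sum_add_distrib, two_mul]]
  generalize (∑ i, z.1 i * w.1 i) = A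
  generalize hR : (∑ i, z.1 i ^ 2) = r at hs ⊢
  field_simp
  ring

private lemma hul (z : EE d) :
    ∃ L : EE d →L[ℝ] ℝ, HasFDerivAt (fun z : EE d => (∑ i, z.1 i ^ 2 - 1) / (∑ i, z.1 i ^ 2 + 1)) L z ∧
      ∀ w : EE d, L w = 4 * (∑ i, z.1 i * w.1 i) / (∑ i, z.1 i ^ 2 + 1) ^ 2 := by
  refine ⟨_, myDiv ((hrD z).sub_const 1) ((hrD z).add_const 1) (hsne z), fun w => ?_⟩
  have hs := hsne z
  simp only [ContinuousLinearMap.add_apply, ContinuousLinearMap.smul_apply,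
    ContinuousLinearMap.coe_sum', Finset.sum_apply, ContinuousLinearMap.comp_apply,
    ContinuousLinearMap.smulRight_apply, ContinuousLinearMap.one_apply,
    ContinuousLinearMap.proj_apply, ContinuousLinearMap.coe_fst', ContinuousLinearMap.coe_snd',
    ContinuousLinearMap.sub_apply, smul_eq_mul]
  rw [show (∑ i, (z.1 i * w.1 i + z.1 i * w.1 i)) = 2 * ∑ i, z.1 i * w.1 i by
    rw [Finset.sum_add_distrib, two_mul]]
  generalize (∑ i, z.1 i * w.1 i) = A
  generalize hR : (∑ i, z.1 i ^ 2) = r at hs ⊢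
  field_simp
  ring

private lemma hv (z : EE d) (k : Fin d) :
    ∃ L : EE d →L[ℝ] ℝ, HasFDerivAt
      (fun z : EE d => ((∑ i, z.1 i ^ 2 + 1) / 2) * z.2 k - (∑ i, z.1 i * z.2 i) * z.1 k) L z ∧
      ∀ w : EE d, L w = (∑ i, z.1 i * w.1 i) * z.2 k + ((∑ i, z.1 i ^ 2 + 1) / 2) * w.2 k
        - (∑ i, (w.1 i * z.2 i + z.1 i * w.2 i)) * z.1 k - (∑ i, z.1 i * z.2 i) * w.1 k := by
  refine ⟨_, HasFDerivAt.sub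
    ((myDiv ((hrD z).add_const 1) (hasFDerivAt_const (2:ℝ) z) two_ne_zero).mul (h2 z k))
    ((hpD z).mul (h1 z k)), fun w => ?_⟩
  simp only [ContinuousLinearMap.add_apply, ContinuousLinearMap.smul_apply,
    ContinuousLinearMap.coe_sum', Finset.sum_apply, ContinuousLinearMap.comp_apply,
    ContinuousLinearMap.smulRight_apply, ContinuousLinearMap.one_apply,
    ContinuousLinearMap.proj_apply, ContinuousLinearMap.coe_fst', ContinuousLinearMap.coe_snd',
    ContinuousLinearMap.sub_apply, ContinuousLinearMap.zero_apply, smul_eq_mul]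
  rw [show (∑ i, (z.1 i * w.1 i + z.1 i * w.1 i)) = 2 * ∑ i, z.1 i * w.1 i by
    rw [Finset.sum_add_distrib, two_mul],
    show (∑ i, (z.1 i * w.2 i + z.2 i * w.1 i)) = ∑ i, (w.1 i * z.2 i + z.1 i * w.2 i) from
      Finset.sum_congr rfl fun i _ => by ring]
  ring

private lemma hvl (z : EE d) :
    ∃ L : EE d →L[ℝ] ℝ, HasFDerivAt (fun z : EE d => ∑ i, z.1 i * z.2 i) L z ∧
      ∀ w : EE d, L w = ∑ i, (w.1 i * z.2 i + z.1 i * w.2 i) := by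
  refine ⟨_, hpD z, fun w => ?_⟩
  simp only [ContinuousLinearMap.add_apply, ContinuousLinearMap.smul_apply,
    ContinuousLinearMap.coe_sum', Finset.sum_apply, ContinuousLinearMap.comp_apply,
    ContinuousLinearMap.proj_apply, ContinuousLinearMap.coe_fst', ContinuousLinearMap.coe_snd',
    smul_eq_mul]
  exact Finset.sum_congr rfl fun i _ => by ring

private lemma coord1 (z : EE d) (k : Fin d) :
    (fun z : EE d => (invSter d z).1 (Fin.castSucc k))
      = fun z : EE d => 2 * z.1 k / (∑ i, z.1 i ^ 2 + 1) := by
  funext z; simp [invSter]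

private lemma coord1l (z : EE d) :
    (fun z : EE d => (invSter d z).1 (Fin.last d))
      = fun z : EE d => (∑ i, z.1 i ^ 2 - 1) / (∑ i, z.1 i ^ 2 + 1) := by
  funext z; simp [invSter]

private lemma coord2 (z : EE d) (k : Fin d) :
    (fun z : EE d => (invSter d z).2 (Fin.castSucc k))
      = fun z : EE d => ((∑ i, z.1 i ^ 2 + 1) / 2) * z.2 k - (∑ i, z.1 i * z.2 i) * z.1 k := by
  funext z; simp [invSter]

private lemma coord2l (z : EE d) :
    (fun z : EE d => (invSter d z).2 (Fin.last d))
      = fun z : EE d => ∑ i, z.1 i * z.2 i := by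
  funext z; simp [invSter]

private lemma hdiff (z : EE d) : DifferentiableAt ℝ (invSter d) z := by
  apply DifferentiableAt.prodMk
  · rw [differentiableAt_pi]
    intro j
    induction j using Fin.lastCases with
    | last => simpa only [Fin.snoc_last] using (hul z).choose_spec.1.differentiableAt
    | cast k => simpa only [Fin.snoc_castSucc] using (hu z k).choose_spec.1.differentiableAt
  · rw [differentiableAt_pi]
    intro j
    induction j using Fin.lastCases with
    | last => simpa only [Fin.snoc_last] using (hvl z).choose_spec.1.differentiableAt
    | cast k => simpa only [Fin.snoc_castSucc] using (hv z k).choose_spec.1.differentiableAt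

private lemma ext1 (z w : EE d) (j : Fin (d + 1)) :
    (fderiv ℝ (invSter d) z w).1 j = fderiv ℝ (fun z => (invSter d z).1 j) z w := by
  set L : ((Fin (d+1) → ℝ) × (Fin (d+1) → ℝ)) →L[ℝ] ℝ :=
    (ContinuousLinearMap.proj j).comp (ContinuousLinearMap.fst ℝ (Fin (d+1) → ℝ) (Fin (d+1) → ℝ)) with hL
  rw [show (fun z : EE d => (invSter d z).1 j) = ⇑L ∘ invSter d from rfl,
    fderiv_comp z L.differentiableAt (hdiff z), ContinuousLinearMap.fderiv]
  rfl

private lemma ext2 (z w : EE d) (j : Fin (d + 1)) :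
    (fderiv ℝ (invSter d) z w).2 j = fderiv ℝ (fun z => (invSter d z).2 j) z w := by
  set L : ((Fin (d+1) → ℝ) × (Fin (d+1) → ℝ)) →L[ℝ] ℝ :=
    (ContinuousLinearMap.proj j).comp (ContinuousLinearMap.snd ℝ (Fin (d+1) → ℝ) (Fin (d+1) → ℝ)) with hL
  rw [show (fun z : EE d => (invSter d z).2 j) = ⇑L ∘ invSter d from rfl,
    fderiv_comp z L.differentiableAt (hdiff z), ContinuousLinearMap.fderiv]
  rfl

private lemma cu (z w : EE d) (k : Fin d) :
    (fderiv ℝ (invSter d) z w).1 (Fin.castSucc k)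
      = (2 * w.1 k * (∑ i, z.1 i ^ 2 + 1) - 4 * (∑ i, z.1 i * w.1 i) * z.1 k)
        / (∑ i, z.1 i ^ 2 + 1) ^ 2 := by
  rw [ext1, coord1 z k]
  obtain ⟨L, hL, hLv⟩ := hu z k
  rw [hL.fderiv]; exact hLv w

private lemma cul (z w : EE d) :
    (fderiv ℝ (invSter d) z w).1 (Fin.last d)
      = 4 * (∑ i, z.1 i * w.1 i) / (∑ i, z.1 i ^ 2 + 1) ^ 2 := by
  rw [ext1, coord1l z]
  obtain ⟨L, hL, hLv⟩ := hul z
  rw [hL.fderiv]; exact hLv w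

private lemma cv (z w : EE d) (k : Fin d) :
    (fderiv ℝ (invSter d) z w).2 (Fin.castSucc k)
      = (∑ i, z.1 i * w.1 i) * z.2 k + ((∑ i, z.1 i ^ 2 + 1) / 2) * w.2 k
        - (∑ i, (w.1 i * z.2 i + z.1 i * w.2 i)) * z.1 k - (∑ i, z.1 i * z.2 i) * w.1 k := by
  rw [ext2, coord2 z k]
  obtain ⟨L, hL, hLv⟩ := hv z k
  rw [hL.fderiv]; exact hLv w

private lemma cvl (z w : EE d) :
    (fderiv ℝ (invSter d) z w).2 (Fin.last d)
      = ∑ i, (w.1 i * z.2 i + z.1 i * w.2 i) := by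
  rw [ext2, coord2l z]
  obtain ⟨L, hL, hLv⟩ := hvl z
  rw [hL.fderiv]; exact hLv w

private lemma keyalg (S A A' P P' p Xk Yk ak bk ak' bk' : ℝ) (hS : S ≠ 0) :
    (A * Yk + S / 2 * bk - P * Xk - p * ak) * ((2 * ak' * S - 4 * A' * Xk) / S ^ 2)
      - (A' * Yk + S / 2 * bk' - P' * Xk - p * ak') * ((2 * ak * S - 4 * A * Xk) / S ^ 2)
    = (bk * ak' - bk' * ak) + 2 * A / S * (Yk * ak') - 2 * A' / S * (Yk * ak)
      - (2 * P / S + 4 * p * A / S ^ 2) * (Xk * ak') + (2 * P' / S + 4 * p * A' / S ^ 2) * (Xk * ak)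
      - 2 * A' / S * (Xk * bk) + 2 * A / S * (Xk * bk')
      + 4 * (P * A' - P' * A) / S ^ 2 * (Xk * Xk) := by
  field_simp
  ring


/-- The pullback of the canonical symplectic form `Σ dv_k ∧ du_k` under the
inverse stereographic projection equals `Σ dY_k ∧ dX_k`: evaluated on any two
tangent vectors `w, w'` at any point `z`, the two bilinear forms agree. -/
theorem stmt2 (d : ℕ) (z w w' : (Fin d → ℝ) × (Fin d → ℝ)) :
    (∑ k, ((fderiv ℝ (invSter d) z w).2 k * (fderiv ℝ (invSter d) z w').1 k
        - (fderiv ℝ (invSter d) z w').2 k * (fderiv ℝ (invSter d) z w).1 k))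
      = ∑ k, (w.2 k * w'.1 k - w'.2 k * w.1 k) := by
  rw [Fin.sum_univ_castSucc]
  simp only [cu, cul, cv, cvl]
  have hS : (∑ i, z.1 i ^ 2 + 1) ≠ 0 := hsne z
  rw [Finset.sum_congr rfl (fun k (_ : k ∈ univ) => keyalg (∑ i, z.1 i ^ 2 + 1)
    (∑ i, z.1 i * w.1 i) (∑ i, z.1 i * w'.1 i)
    (∑ i, (w.1 i * z.2 i + z.1 i * w.2 i)) (∑ i, (w'.1 i * z.2 i + z.1 i * w'.2 i))
    (∑ i, z.1 i * z.2 i) (z.1 k) (z.2 k) (w.1 k) (w.2 k) (w'.1 k) (w'.2 k) hS)]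
  simp only [Finset.sum_add_distrib, Finset.sum_sub_distrib, ← Finset.mul_sum]
  rw [show (∑ x, w.1 x * z.2 x) = ∑ i, z.2 i * w.1 i from
      Finset.sum_congr rfl fun i _ => mul_comm _ _,
    show (∑ x, w'.1 x * z.2 x) = ∑ i, z.2 i * w'.1 i from
      Finset.sum_congr rfl fun i _ => mul_comm _ _,
    show (∑ x, z.1 x * z.1 x) = ∑ i, z.1 i ^ 2 from
      Finset.sum_congr rfl fun i _ => (sq (z.1 i)).symm]
  generalize (∑ i, z.2 i * w.1 i) = Q at *
  generalize (∑ i, z.2 i * w'.1 i) = Q' at *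
  generalize (∑ i, z.1 i * w.1 i) = A at *
  generalize (∑ i, z.1 i * w'.1 i) = A' at *
  generalize (∑ i, z.1 i * w.2 i) = R at *
  generalize (∑ i, z.1 i * w'.2 i) = R' at *
  generalize (∑ i, z.1 i * z.2 i) = p at *
  generalize (∑ i, z.1 i ^ 2) = r at *
  field_simp
  ring
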